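/- Let g_α(b) = b + (1-α)^{-1} E_π[(L-b)_+] for α ∈ (0,1), a probability measure π, and an integrable random variable L. Then g_α is convex in b, tends to +∞ as b → ±∞, its subdifferential at b is the interval [1 - (1-α)^{-1} π(L ≥ b), 1 - (1-α)^{-1} π(L > b)], and the set of minimizers of g_α equals { b : π(L > b) ≤ 1-α ≤ π(L ≥ b) }. -/

import Mathlib

open MeasureTheory Filter Set
open Topology

section Aux

variable {Ω : Type*} [MeasurableSpace Ω] (π : Measure Ω) [IsProbabilityMeasure π]
  (L : Ω → ℝ)

lemma aux_intpos (hL : Integrable L π) (b : ℝ) :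
    Integrable (fun ω => max (L ω - b) 0) π :=
  (hL.sub (integrable_const b)).pos_part

lemma aux_sandwich (hLmeas : Measurable L) (hL : Integrable L π) {b b' : ℝ} (h : b ≤ b') :
    (b' - b) * (π {ω | b' ≤ L ω}).toReal ≤
      (∫ ω, max (L ω - b) 0 ∂π) - ∫ ω, max (L ω - b') 0 ∂π ∧
    (∫ ω, max (L ω - b) 0 ∂π) - ∫ ω, max (L ω - b') 0 ∂π ≤
      (b' - b) * (π {ω | b < L ω}).toReal := by
  have hmeas1 : MeasurableSet {ω | b' ≤ L ω} := hLmeas measurableSet_Ici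
  have hmeas2 : MeasurableSet {ω | b < L ω} := hLmeas measurableSet_Ioi
  have hint := aux_intpos π L hL
  have hsub : ∫ ω, (max (L ω - b) 0 - max (L ω - b') 0) ∂π =
      (∫ ω, max (L ω - b) 0 ∂π) - ∫ ω, max (L ω - b') 0 ∂π :=
    integral_sub (hint b) (hint b')
  constructor
  · have hpt : ∀ ω, ({ω | b' ≤ L ω}).indicator (fun _ => b' - b) ω ≤
        max (L ω - b) 0 - max (L ω - b') 0 := by
      intro ω
      simp only [Set.indicator_apply, mem_setOf_eq]
      split_ifs with hω
      · rw [max_eq_left (by linarith : (0:ℝ) ≤ L ω - b),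
          max_eq_left (by linarith : (0:ℝ) ≤ L ω - b')]
        linarith
      · push_neg at hω
        rw [max_eq_right (by linarith : L ω - b' ≤ 0), sub_zero]
        exact le_max_right _ _
    calc (b' - b) * (π {ω | b' ≤ L ω}).toReal
        = ∫ ω, ({ω | b' ≤ L ω}).indicator (fun _ => b' - b) ω ∂π := by
          rw [integral_indicator_const _ hmeas1, smul_eq_mul, mul_comm]; rfl
      _ ≤ ∫ ω, (max (L ω - b) 0 - max (L ω - b') 0) ∂π :=
          integral_mono ((integrable_const (b' - b)).indicator hmeas1)
            ((hint b).sub (hint b')) hpt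
      _ = _ := hsub
  · have hpt : ∀ ω, max (L ω - b) 0 - max (L ω - b') 0 ≤
        ({ω | b < L ω}).indicator (fun _ => b' - b) ω := by
      intro ω
      simp only [Set.indicator_apply, mem_setOf_eq]
      split_ifs with hω
      · rw [max_eq_left (by linarith : (0:ℝ) ≤ L ω - b)]
        have := le_max_left (L ω - b') (0:ℝ)
        linarith
      · push_neg at hω
        rw [max_eq_right (by linarith : L ω - b ≤ 0),
          max_eq_right (by linarith : L ω - b' ≤ 0)]
        norm_num
    calc (∫ ω, max (L ω - b) 0 ∂π) - ∫ ω, max (L ω - b') 0 ∂π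
        = ∫ ω, (max (L ω - b) 0 - max (L ω - b') 0) ∂π := hsub.symm
      _ ≤ ∫ ω, ({ω | b < L ω}).indicator (fun _ => b' - b) ω ∂π :=
          integral_mono ((hint b).sub (hint b'))
            ((integrable_const (b' - b)).indicator hmeas2) hpt
      _ = (b' - b) * (π {ω | b < L ω}).toReal := by
          rw [integral_indicator_const _ hmeas2, smul_eq_mul, mul_comm]; rfl

lemma aux_tendsto_gt (hLmeas : Measurable L) (b : ℝ) :
    Tendsto (fun n : ℕ => (π {ω | b + ((n:ℝ) + 1)⁻¹ ≤ L ω}).toReal) atTop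
      (𝓝 (π {ω | b < L ω}).toReal) := by
  have hmono : Monotone (fun n : ℕ => {ω | b + ((n:ℝ) + 1)⁻¹ ≤ L ω}) := by
    intro n m hnm ω hω
    simp only [mem_setOf_eq] at *
    have h1 : ((m:ℝ) + 1)⁻¹ ≤ ((n:ℝ) + 1)⁻¹ := by
      have hnm' : ((n:ℝ) + 1) ≤ ((m:ℝ) + 1) := by exact_mod_cast Nat.succ_le_succ hnm
      exact inv_anti₀ (by positivity) hnm'
    linarith
  have hU : (⋃ n : ℕ, {ω | b + ((n:ℝ) + 1)⁻¹ ≤ L ω}) = {ω | b < L ω} := by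
    ext ω
    simp only [mem_iUnion, mem_setOf_eq]
    constructor
    · rintro ⟨n, hn⟩
      have : (0:ℝ) < ((n:ℝ) + 1)⁻¹ := by positivity
      linarith
    · intro h
      obtain ⟨n, hn⟩ := exists_nat_one_div_lt (sub_pos.2 h)
      exact ⟨n, by rw [one_div] at hn; linarith⟩
  have := tendsto_measure_iUnion_atTop (μ := π) hmono
  rw [hU] at this
  exact (ENNReal.tendsto_toReal (measure_ne_top π _)).comp this

lemma aux_tendsto_ge (hLmeas : Measurable L) (b : ℝ) :
    Tendsto (fun n : ℕ => (π {ω | b - ((n:ℝ) + 1)⁻¹ < L ω}).toReal) atTop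
      (𝓝 (π {ω | b ≤ L ω}).toReal) := by
  have hanti : Antitone (fun n : ℕ => {ω | b - ((n:ℝ) + 1)⁻¹ < L ω}) := by
    intro n m hnm ω hω
    simp only [mem_setOf_eq] at *
    have h1 : ((m:ℝ) + 1)⁻¹ ≤ ((n:ℝ) + 1)⁻¹ := by
      have hnm' : ((n:ℝ) + 1) ≤ ((m:ℝ) + 1) := by exact_mod_cast Nat.succ_le_succ hnm
      exact inv_anti₀ (by positivity) hnm'
    linarith
  have hU : (⋂ n : ℕ, {ω | b - ((n:ℝ) + 1)⁻¹ < L ω}) = {ω | b ≤ L ω} := by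
    ext ω
    simp only [mem_iInter, mem_setOf_eq]
    constructor
    · intro h
      by_contra hc
      push_neg at hc
      obtain ⟨n, hn⟩ := exists_nat_one_div_lt (sub_pos.2 hc)
      rw [one_div] at hn
      have := h n
      linarith
    · intro h n
      have : (0:ℝ) < ((n:ℝ) + 1)⁻¹ := by positivity
      linarith
  have := tendsto_measure_iInter_atTop (μ := π) (s := fun n : ℕ => {ω | b - ((n:ℝ) + 1)⁻¹ < L ω})
    (fun n => (hLmeas measurableSet_Ioi).nullMeasurableSet) hanti ⟨0, measure_ne_top π _⟩
  rw [hU] at this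
  exact (ENNReal.tendsto_toReal (measure_ne_top π _)).comp this

end Aux

theorem stmt_0 {Ω : Type*} [MeasurableSpace Ω] (π : Measure Ω) [IsProbabilityMeasure π]
    (L : Ω → ℝ) (hLmeas : Measurable L) (hL : Integrable L π)
    (α : ℝ) (hα : α ∈ Set.Ioo (0:ℝ) 1)
    (g : ℝ → ℝ) (hg : ∀ b, g b = b + (1 - α)⁻¹ * ∫ ω, max (L ω - b) 0 ∂π) :
    ConvexOn ℝ Set.univ g ∧
    Tendsto g atTop atTop ∧
    Tendsto g atBot atTop ∧
    (∀ b : ℝ, {s : ℝ | ∀ b' : ℝ, g b + s * (b' - b) ≤ g b'} =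
      Set.Icc (1 - (1 - α)⁻¹ * (π {ω | b ≤ L ω}).toReal)
              (1 - (1 - α)⁻¹ * (π {ω | b < L ω}).toReal)) ∧
    {b : ℝ | ∀ b' : ℝ, g b ≤ g b'} =
      {b : ℝ | (π {ω | b < L ω}).toReal ≤ 1 - α ∧ 1 - α ≤ (π {ω | b ≤ L ω}).toReal} := by
  obtain ⟨hα0, hα1⟩ := hα
  set c : ℝ := (1 - α)⁻¹ with hc_def
  have h1α : (0:ℝ) < 1 - α := by linarith
  have hc0 : 0 < c := inv_pos.2 h1α
  have hcα : c * (1 - α) = 1 := inv_mul_cancel₀ (ne_of_gt h1α)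
  have hc1 : 1 < c := by nlinarith [mul_pos hc0 hα0]
  set I : ℝ → ℝ := fun b => ∫ ω, max (L ω - b) 0 ∂π with hI_def
  have hint : ∀ b, Integrable (fun ω => max (L ω - b) 0) π := aux_intpos π L hL
  have hInn : ∀ b, 0 ≤ I b := fun b => integral_nonneg fun ω => le_max_right _ _
  have hsand := fun {b b' : ℝ} (h : b ≤ b') => aux_sandwich π L hLmeas hL h
  -- subdifferential characterization
  have hsubdiff : ∀ b : ℝ, {s : ℝ | ∀ b' : ℝ, g b + s * (b' - b) ≤ g b'} =
      Set.Icc (1 - c * (π {ω | b ≤ L ω}).toReal) (1 - c * (π {ω | b < L ω}).toReal) := by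
    intro b
    ext s
    simp only [mem_setOf_eq, Set.mem_Icc]
    constructor
    · intro hs
      constructor
      · -- lower bound via b' = b - (n+1)⁻¹ < b
        have key : ∀ n : ℕ, 1 - c * (π {ω | b - ((n:ℝ) + 1)⁻¹ < L ω}).toReal ≤ s := by
          intro n
          set b' : ℝ := b - ((n:ℝ) + 1)⁻¹ with hb'_def
          have hpos : (0:ℝ) < ((n:ℝ) + 1)⁻¹ := by positivity
          have hlt : b' < b := by simp only [hb'_def]; linarith
          have hupper := (hsand hlt.le).2
          -- I b' - I b ≤ (b - b') * π{b' < L}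
          have hgb := hs b'
          rw [hg b, hg b'] at hgb
          -- hgb : b + c * I b + s * (b' - b) ≤ b' + c * I b'
          have hmul : s * (b - b') ≥ (1 - c * (π {ω | b' < L ω}).toReal) * (b - b') := by
            have h2 : c * (I b' - I b) ≤ c * ((b - b') * (π {ω | b' < L ω}).toReal) :=
              mul_le_mul_of_nonneg_left hupper hc0.le
            nlinarith
          have hbb : 0 < b - b' := by linarith
          exact le_of_mul_le_mul_right hmul hbb
        have hlim : Tendsto (fun n : ℕ => 1 - c * (π {ω | b - ((n:ℝ) + 1)⁻¹ < L ω}).toReal)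
            atTop (𝓝 (1 - c * (π {ω | b ≤ L ω}).toReal)) :=
          Filter.Tendsto.const_sub _ ((aux_tendsto_ge π L hLmeas b).const_mul c)
        exact le_of_tendsto' hlim key
      · -- upper bound via b' = b + (n+1)⁻¹ > b
        have key : ∀ n : ℕ, s ≤ 1 - c * (π {ω | b + ((n:ℝ) + 1)⁻¹ ≤ L ω}).toReal := by
          intro n
          set b' : ℝ := b + ((n:ℝ) + 1)⁻¹ with hb'_def
          have hpos : (0:ℝ) < ((n:ℝ) + 1)⁻¹ := by positivity
          have hlt : b < b' := by simp only [hb'_def]; linarith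
          have hlower := (hsand hlt.le).1
          -- (b' - b) * π{b' ≤ L} ≤ I b - I b'
          have hgb := hs b'
          rw [hg b, hg b'] at hgb
          have h2 : c * ((b' - b) * (π {ω | b' ≤ L ω}).toReal) ≤ c * (I b - I b') :=
            mul_le_mul_of_nonneg_left hlower hc0.le
          have hbb : 0 < b' - b := by linarith
          nlinarith
        have hlim : Tendsto (fun n : ℕ => 1 - c * (π {ω | b + ((n:ℝ) + 1)⁻¹ ≤ L ω}).toReal)
            atTop (𝓝 (1 - c * (π {ω | b < L ω}).toReal)) :=
          Filter.Tendsto.const_sub _ ((aux_tendsto_gt π L hLmeas b).const_mul c)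
        exact ge_of_tendsto' hlim key
    · rintro ⟨h1, h2⟩ b'
      rw [hg b, hg b']
      rcases le_total b b' with hbb | hbb
      · have hhigh := (hsand hbb).2
        -- I b - I b' ≤ (b' - b) * π{b < L}
        have h3 : c * (I b - I b') ≤ c * ((b' - b) * (π {ω | b < L ω}).toReal) :=
          mul_le_mul_of_nonneg_left hhigh hc0.le
        have h4 : s * (b' - b) ≤ (1 - c * (π {ω | b < L ω}).toReal) * (b' - b) :=
          mul_le_mul_of_nonneg_right h2 (by linarith)
        nlinarith
      · have hlow := (hsand hbb).1
        -- (b - b') * π{b ≤ L} ≤ I b' - I b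
        have h3 : c * ((b - b') * (π {ω | b ≤ L ω}).toReal) ≤ c * (I b' - I b) :=
          mul_le_mul_of_nonneg_left hlow hc0.le
        have h4 : s * (b' - b) ≤ (1 - c * (π {ω | b ≤ L ω}).toReal) * (b' - b) := by
          nlinarith
        nlinarith
  refine ⟨?_, ?_, ?_, hsubdiff, ?_⟩
  · -- convexity
    refine ⟨convex_univ, fun x _ y _ a t ha ht hat => ?_⟩
    simp only [smul_eq_mul]
    have hpt : ∀ ω, max (L ω - (a * x + t * y)) 0 ≤
        a * max (L ω - x) 0 + t * max (L ω - y) 0 := by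
      intro ω
      refine max_le ?_ ?_
      · have h1 : a * (L ω - x) ≤ a * max (L ω - x) 0 :=
          mul_le_mul_of_nonneg_left (le_max_left _ _) ha
        have h2 : t * (L ω - y) ≤ t * max (L ω - y) 0 :=
          mul_le_mul_of_nonneg_left (le_max_left _ _) ht
        have hsum : L ω - (a * x + t * y) = a * (L ω - x) + t * (L ω - y) := by
          linear_combination (-(L ω)) * hat
        linarith
      · exact add_nonneg (mul_nonneg ha (le_max_right _ _)) (mul_nonneg ht (le_max_right _ _))
    have hIineq : I (a * x + t * y) ≤ a * I x + t * I y := by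
      calc I (a * x + t * y) ≤ ∫ ω, (a * max (L ω - x) 0 + t * max (L ω - y) 0) ∂π :=
            integral_mono (hint _) (((hint x).const_mul a).add ((hint y).const_mul t)) hpt
        _ = a * I x + t * I y := by
            rw [integral_add ((hint x).const_mul a) ((hint y).const_mul t),
              integral_const_mul, integral_const_mul]
    rw [hg, hg, hg]
    have := mul_le_mul_of_nonneg_left hIineq hc0.le
    nlinarith
  · -- atTop
    apply tendsto_atTop_mono (fun b => ?_) tendsto_id
    rw [hg b]
    have := hInn b
    simp only [id_eq]
    nlinarith
  · -- atBot
    have hEL : ∀ b : ℝ, (∫ ω, L ω ∂π) - b ≤ I b := by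
      intro b
      have : ∫ ω, (L ω - b) ∂π ≤ I b :=
        integral_mono (hL.sub (integrable_const b)) (hint b) fun ω => le_max_left _ _
      rwa [integral_sub hL (integrable_const b), integral_const, Measure.real, measure_univ,
        ENNReal.toReal_one, one_smul] at this
    apply tendsto_atTop_mono (fun b => ?_)
      (tendsto_atTop_add_const_right atBot (c * ∫ ω, L ω ∂π)
        ((tendsto_const_mul_atTop_of_neg (by linarith : 1 - c < 0)).2 tendsto_id))
    rw [hg b]
    have h1 := hEL b
    have h2 : c * ((∫ ω, L ω ∂π) - b) ≤ c * I b := mul_le_mul_of_nonneg_left h1 hc0.le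
    simp only [id_eq]
    nlinarith
  · -- minimizers
    ext b
    simp only [mem_setOf_eq]
    have h0 : (∀ b' : ℝ, g b ≤ g b') ↔
        (0:ℝ) ∈ {s : ℝ | ∀ b' : ℝ, g b + s * (b' - b) ≤ g b'} := by
      simp only [mem_setOf_eq, zero_mul, add_zero]
    rw [h0, hsubdiff b, Set.mem_Icc]
    constructor
    · rintro ⟨hlo, hhi⟩
      constructor
      · -- 0 ≤ 1 - c * π{b < L} ⇒ π{b < L} ≤ 1 - α
        nlinarith [(π {ω | b < L ω}).toReal]
      · nlinarith
    · rintro ⟨hlo, hhi⟩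
      constructor
      · nlinarith
      · nlinarith
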